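/- Existence of a root for the SKR equation: for u ∈ ℝ^C with a unique strict maximum and any target entropy E with 0 < E < log₂ C, there exists θ* > 0 such that H(ψ(θ*; u)) = E, where H is the base-2 Shannon entropy of the temperature-scaled softmax. -/

import Mathlib

open Real Finset Filter Topology Set

lemma xexp_tendsto : Tendsto (fun x : ℝ => x * Real.exp x) atBot (𝓝 0) := by
  have h := (Real.tendsto_pow_mul_exp_neg_atTop_nhds_zero 1).comp tendsto_neg_atBot_atTop
  have h2 : ((fun x : ℝ => x ^ 1 * Real.exp (-x)) ∘ (fun x : ℝ => -x))
      = fun x : ℝ => -(x * Real.exp x) := by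
    funext x; simp [Function.comp]
  rw [h2] at h
  simpa using h.neg

/-- Existence of a root for the SKR equation. -/
theorem skr_root_exists (C : ℕ) (hC : 2 ≤ C) (u : Fin C → ℝ)
    (m : Fin C) (hm : ∀ i, i ≠ m → u i < u m)
    (E : ℝ) (hE1 : 0 < E) (hE2 : E < Real.logb 2 (C : ℝ)) :
    ∃ θ : ℝ, 0 < θ ∧
      -∑ i, (Real.exp (u i / θ) / (∑ j, Real.exp (u j / θ))) *
          Real.logb 2 (Real.exp (u i / θ) / (∑ j, Real.exp (u j / θ))) = E := by
  have hCpos : 0 < C := by omega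
  haveI : Nonempty (Fin C) := Fin.pos_iff_nonempty.mp hCpos
  set S : ℝ → ℝ := fun θ => ∑ j, Real.exp (u j / θ) with hSdef
  have hS : ∀ θ, 0 < S θ := fun θ =>
    Finset.sum_pos (fun j _ => Real.exp_pos _) Finset.univ_nonempty
  have hsum1 : ∀ θ, ∑ i, Real.exp (u i / θ) / S θ = 1 := by
    intro θ; rw [← Finset.sum_div, div_self (hS θ).ne']
  set g : ℝ → ℝ := fun θ =>
    (Real.log (S θ) - ∑ i, Real.exp (u i / θ) / S θ * (u i / θ)) / Real.log 2 with hgdef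
  -- Step 1: identity with the statement's entropy expression
  have hfg : ∀ θ : ℝ,
      -∑ i, (Real.exp (u i / θ) / (∑ j, Real.exp (u j / θ))) *
          Real.logb 2 (Real.exp (u i / θ) / (∑ j, Real.exp (u j / θ))) = g θ := by
    intro θ
    have h1 : ∑ i, Real.exp (u i / θ) / S θ * Real.logb 2 (Real.exp (u i / θ) / S θ)
        = ∑ i, Real.exp (u i / θ) / S θ * ((u i / θ - Real.log (S θ)) / Real.log 2) := by
      refine Finset.sum_congr rfl fun i _ => ?_
      rw [Real.logb, Real.log_div (Real.exp_ne_zero _) (hS θ).ne', Real.log_exp]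
    have h2 : ∑ i, Real.exp (u i / θ) / S θ * ((u i / θ - Real.log (S θ)) / Real.log 2)
        = (∑ i, Real.exp (u i / θ) / S θ * (u i / θ)) / Real.log 2
          - (∑ i, Real.exp (u i / θ) / S θ) * (Real.log (S θ) / Real.log 2) := by
      rw [Finset.sum_div, Finset.sum_mul, ← Finset.sum_sub_distrib]
      exact Finset.sum_congr rfl fun i _ => by ring
    show -∑ i, Real.exp (u i / θ) / S θ * Real.logb 2 (Real.exp (u i / θ) / S θ) = g θ
    rw [h1, h2, hsum1 θ, one_mul, hgdef]
    ring
  -- Step 3: continuity of g on Ioi 0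
  have hdivcont : ∀ i : Fin C, ContinuousOn (fun θ : ℝ => u i / θ) (Ioi 0) := by
    intro i
    exact continuousOn_const.div continuousOn_id (fun θ hθ => ne_of_gt hθ)
  have hScont : ContinuousOn S (Ioi 0) := by
    apply continuousOn_finset_sum
    intro j _
    exact Real.continuous_exp.comp_continuousOn (hdivcont j)
  have hgcont : ContinuousOn g (Ioi 0) := by
    apply ContinuousOn.div_const
    apply ContinuousOn.sub
    · exact hScont.log (fun θ hθ => (hS θ).ne')
    · apply continuousOn_finset_sum
      intro i _
      exact ((Real.continuous_exp.comp_continuousOn (hdivcont i)).div hScont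
        (fun θ hθ => (hS θ).ne')).mul (hdivcont i)
  -- Step 4: limit at infinity
  have hx0 : ∀ i : Fin C, Tendsto (fun θ : ℝ => u i / θ) atTop (𝓝 0) :=
    fun i => tendsto_const_nhds.div_atTop tendsto_id
  have hStop : Tendsto S atTop (𝓝 (C : ℝ)) := by
    have : Tendsto S atTop (𝓝 (∑ _j : Fin C, (1 : ℝ))) := by
      apply tendsto_finset_sum
      intro j _
      have := (Real.continuous_exp.tendsto 0).comp (hx0 j)
      simpa [Function.comp_def] using this
    simpa using this
  have hgtop : Tendsto g atTop (𝓝 (Real.logb 2 (C : ℝ))) := by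
    have hCne : (C : ℝ) ≠ 0 := Nat.cast_ne_zero.mpr hCpos.ne'
    have hlog : Tendsto (fun θ => Real.log (S θ)) atTop (𝓝 (Real.log (C : ℝ))) :=
      (Real.continuousAt_log hCne).tendsto.comp hStop
    have hterm : ∀ i : Fin C,
        Tendsto (fun θ => Real.exp (u i / θ) / S θ * (u i / θ)) atTop (𝓝 0) := by
      intro i
      have h1 : Tendsto (fun θ => Real.exp (u i / θ) / S θ) atTop (𝓝 (1 / (C : ℝ))) := by
        apply Tendsto.div _ hStop hCne
        have := (Real.continuous_exp.tendsto 0).comp (hx0 i)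
        simpa [Function.comp_def] using this
      simpa using h1.mul (hx0 i)
    have hsum : Tendsto (fun θ => ∑ i, Real.exp (u i / θ) / S θ * (u i / θ)) atTop (𝓝 0) := by
      have := tendsto_finset_sum Finset.univ (fun i _ => hterm i)
      simpa using this
    have := (hlog.sub hsum).div_const (Real.log 2)
    simpa [Real.logb] using this
  -- Step 5: limit at 0+ via shifting by the max
  set v : Fin C → ℝ := fun i => u i - u m with hvdef
  set T : ℝ → ℝ := fun θ => ∑ j, Real.exp (v j / θ) with hTdef
  have hT : ∀ θ, 0 < T θ := fun θ =>
    Finset.sum_pos (fun j _ => Real.exp_pos _) Finset.univ_nonempty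
  have hshift : ∀ θ : ℝ, θ ≠ 0 → g θ =
      (Real.log (T θ) - (∑ i, Real.exp (v i / θ) * (v i / θ)) / T θ) / Real.log 2 := by
    intro θ hθ
    have hexp : ∀ i : Fin C, Real.exp (u i / θ) = Real.exp (v i / θ) * Real.exp (u m / θ) := by
      intro i
      rw [← Real.exp_add]
      congr 1
      field_simp [hvdef]
      simp [hvdef]
    have hST : S θ = T θ * Real.exp (u m / θ) := by
      show ∑ j, Real.exp (u j / θ) = (∑ j, Real.exp (v j / θ)) * Real.exp (u m / θ)
      rw [Finset.sum_mul]
      exact Finset.sum_congr rfl fun j _ => hexp j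
    have hp : ∀ i : Fin C, Real.exp (u i / θ) / S θ = Real.exp (v i / θ) / T θ := by
      intro i
      rw [hexp i, hST, mul_div_mul_right _ _ (Real.exp_ne_zero _)]
    have hlogS : Real.log (S θ) = Real.log (T θ) + u m / θ := by
      rw [hST, Real.log_mul (hT θ).ne' (Real.exp_ne_zero _), Real.log_exp]
    have hui : ∀ i : Fin C, u i / θ = v i / θ + u m / θ := by
      intro i; field_simp [hvdef]
      simp [hvdef]
    have hsum1v : ∑ i, Real.exp (v i / θ) / T θ = 1 := by
      rw [← Finset.sum_div, div_self (hT θ).ne']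
    have hnum : ∑ i, Real.exp (u i / θ) / S θ * (u i / θ)
        = (∑ i, Real.exp (v i / θ) * (v i / θ)) / T θ + u m / θ := by
      calc ∑ i, Real.exp (u i / θ) / S θ * (u i / θ)
          = ∑ i, (Real.exp (v i / θ) * (v i / θ) / T θ
              + Real.exp (v i / θ) / T θ * (u m / θ)) := by
            refine Finset.sum_congr rfl fun i _ => ?_
            rw [hp i, hui i]; ring
        _ = (∑ i, Real.exp (v i / θ) * (v i / θ)) / T θ
              + (∑ i, Real.exp (v i / θ) / T θ) * (u m / θ) := by
            rw [Finset.sum_add_distrib, Finset.sum_div, Finset.sum_mul]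
        _ = (∑ i, Real.exp (v i / θ) * (v i / θ)) / T θ + u m / θ := by
            rw [hsum1v, one_mul]
    rw [hgdef]
    simp only
    rw [hlogS, hnum]
    ring
  have hvneg : ∀ i : Fin C, i ≠ m → v i < 0 := fun i hi => sub_neg.mpr (hm i hi)
  have hvbot : ∀ i : Fin C, i ≠ m → Tendsto (fun θ : ℝ => v i / θ) (𝓝[>] 0) atBot := by
    intro i hi
    have : Tendsto (fun θ : ℝ => v i * θ⁻¹) (𝓝[>] (0:ℝ)) atBot :=
      (tendsto_const_mul_atBot_of_neg (hvneg i hi)).mpr tendsto_inv_nhdsGT_zero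
    simpa [div_eq_mul_inv] using this
  have hT1 : Tendsto T (𝓝[>] 0) (𝓝 1) := by
    have : Tendsto T (𝓝[>] (0:ℝ)) (𝓝 (∑ j : Fin C, if j = m then (1:ℝ) else 0)) := by
      apply tendsto_finset_sum
      intro j _
      by_cases hj : j = m
      · subst hj
        simp [hTdef, hvdef]
      · simp only [hj, if_neg hj]
        exact Real.tendsto_exp_atBot.comp (hvbot j hj)
    simpa using this
  have hnum0 : Tendsto (fun θ => ∑ i, Real.exp (v i / θ) * (v i / θ)) (𝓝[>] (0:ℝ)) (𝓝 0) := by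
    have : Tendsto (fun θ => ∑ i, Real.exp (v i / θ) * (v i / θ)) (𝓝[>] (0:ℝ))
        (𝓝 (∑ _i : Fin C, (0:ℝ))) := by
      apply tendsto_finset_sum
      intro i _
      by_cases hi : i = m
      · subst hi
        simp [hvdef]
      · have := xexp_tendsto.comp (hvbot i hi)
        simpa [Function.comp_def, mul_comm] using this
    simpa using this
  have hg0 : Tendsto g (𝓝[>] (0:ℝ)) (𝓝 0) := by
    have hmain : Tendsto (fun θ =>
        (Real.log (T θ) - (∑ i, Real.exp (v i / θ) * (v i / θ)) / T θ) / Real.log 2)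
        (𝓝[>] (0:ℝ)) (𝓝 0) := by
      have hlogT : Tendsto (fun θ => Real.log (T θ)) (𝓝[>] (0:ℝ)) (𝓝 0) := by
        have := (Real.continuousAt_log one_ne_zero).tendsto.comp hT1
        simpa [Function.comp_def] using this
      have hq : Tendsto (fun θ => (∑ i, Real.exp (v i / θ) * (v i / θ)) / T θ)
          (𝓝[>] (0:ℝ)) (𝓝 0) := by
        have := hnum0.div hT1 one_ne_zero
        simpa [Pi.div_def] using this
      have := (hlogT.sub hq).div_const (Real.log 2)
      simpa using this
    apply hmain.congr'
    filter_upwards [self_mem_nhdsWithin] with θ hθ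
    exact (hshift θ (ne_of_gt hθ)).symm
  -- Step 6: IVT
  obtain ⟨a, hga, ha⟩ := ((hg0.eventually_lt_const hE1).and self_mem_nhdsWithin).exists
  obtain ⟨b, hgb, hab⟩ :=
    ((hgtop.eventually_const_lt hE2).and (eventually_gt_atTop a)).exists
  have hsub : Icc a b ⊆ Ioi 0 := fun x hx => lt_of_lt_of_le ha hx.1
  have hmem : E ∈ Icc (g a) (g b) := ⟨le_of_lt hga, le_of_lt hgb⟩
  obtain ⟨θ, hθmem, hθE⟩ :=
    intermediate_value_Icc (le_of_lt hab) (hgcont.mono hsub) hmem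
  exact ⟨θ, lt_of_lt_of_le ha hθmem.1, by rw [hfg θ]; exact hθE⟩
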